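/- Let (M_n) be a square-integrable martingale with respect to a filtration (ℱ_n), with bracket ⟨M⟩_n = ∑_{k=0}^{n} E[(M_{k+1}-M_k)² | ℱ_k]. Then almost surely on the event {⟨M⟩_∞ < ∞}, M_n converges to a finite limit. -/

import Mathlib

open MeasureTheory Filter

/-- Doob: a square-integrable martingale converges a.s. on the event where its
predictable quadratic variation `⟨M⟩_∞` is finite. -/
theorem martingale_converges_on_bracket_finite
    {Ω : Type*} {m0 : MeasurableSpace Ω} (μ : Measure Ω) [IsProbabilityMeasure μ]
    (ℱ : Filtration ℕ m0) (M : ℕ → Ω → ℝ)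
    (hM : Martingale M ℱ μ) (hM2 : ∀ n, MemLp (M n) 2 μ) :
    ∀ᵐ ω ∂μ,
      BddAbove (Set.range fun n : ℕ =>
        ∑ k ∈ Finset.range (n + 1),
          (μ[(fun ω' => (M (k + 1) ω' - M k ω') ^ 2) | ℱ k]) ω) →
      ∃ c : ℝ, Tendsto (fun n => M n ω) atTop (nhds c) := by
  classical
  set e : ℕ → Ω → ℝ := fun k => μ[(fun ω' => (M (k + 1) ω' - M k ω') ^ 2) | ℱ k] with he
  have hΔ2 : ∀ k, MemLp (fun ω => M (k + 1) ω - M k ω) 2 μ :=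
    fun k => (hM2 (k + 1)).sub (hM2 k)
  have hΔint : ∀ k, Integrable (fun ω => M (k + 1) ω - M k ω) μ :=
    fun k => (hΔ2 k).integrable one_le_two
  have hΔsq_int : ∀ k, Integrable (fun ω => (M (k + 1) ω - M k ω) ^ 2) μ :=
    fun k => (hΔ2 k).integrable_sq
  have he_int : ∀ k, Integrable (e k) μ := fun k => integrable_condExp
  have he_meas : ∀ k, StronglyMeasurable[ℱ k] (e k) := fun k => stronglyMeasurable_condExp
  have he_nonneg : ∀ᵐ ω ∂μ, ∀ k, 0 ≤ e k ω := by
    rw [ae_all_iff]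
    exact fun k => condExp_nonneg (Eventually.of_forall fun ω => sq_nonneg _)
  have hΔ0 : ∀ n, μ[(fun ω => M (n + 1) ω - M n ω) | ℱ n] =ᵐ[μ] 0 := by
    intro n
    have h2 : μ[(fun ω => M (n + 1) ω - M n ω) | ℱ n] =ᵐ[μ] μ[M (n + 1)|ℱ n] - μ[M n|ℱ n] :=
      condExp_sub (hM.integrable (n + 1)) (hM.integrable n) _
    have h1 : μ[M (n + 1)|ℱ n] =ᵐ[μ] M n := hM.condExp_ae_eq (Nat.le_succ n)
    have h3 : μ[M n|ℱ n] = M n :=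
      condExp_of_stronglyMeasurable (ℱ.le n) (hM.stronglyAdapted n) (hM.integrable n)
    filter_upwards [h2, h1] with ω hω2 hω1
    simp [hω2, h3, hω1, Pi.sub_apply]
  -- main step: for each integer bound K
  have key : ∀ K : ℕ, ∀ᵐ ω ∂μ,
      (∀ n, (∑ k ∈ Finset.range (n + 1), e k ω) ≤ (K : ℝ)) →
      ∃ c, Tendsto (fun n => M n ω) atTop (nhds c) := by
    intro K
    set G : ℕ → Set Ω :=
      fun k => {ω | ∀ j ≤ k, (∑ i ∈ Finset.range (j + 1), e i ω) ≤ (K : ℝ)} with hGdef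
    have hGmeas : ∀ k, MeasurableSet[ℱ k] (G k) := by
      intro k
      have hset : G k = ⋂ j ∈ Set.Iic k, {ω | (∑ i ∈ Finset.range (j + 1), e i ω) ≤ (K : ℝ)} := by
        ext ω; simp [hGdef]
      rw [hset]
      refine MeasurableSet.biInter (Set.to_countable _) fun j hj => ?_
      have hmeas : Measurable[ℱ k] fun ω => ∑ i ∈ Finset.range (j + 1), e i ω := by
        refine Finset.measurable_sum _ fun i hi => ?_
        have hik : i ≤ k := le_trans (Nat.lt_succ_iff.mp (Finset.mem_range.mp hi)) hj
        exact ((he_meas i).mono (ℱ.mono hik)).measurable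
      exact hmeas measurableSet_Iic
    have hGanti : ∀ {k l : ℕ}, k ≤ l → G l ⊆ G k :=
      fun {k l} hkl ω hω j hj => hω j (hj.trans hkl)
    set D : ℕ → Ω → ℝ := fun k => (G k).indicator (fun ω => M (k + 1) ω - M k ω) with hDdef
    have hD2 : ∀ k, MemLp (D k) 2 μ :=
      fun k => (hΔ2 k).indicator ((ℱ.le k) _ (hGmeas k))
    have hDm : ∀ k, StronglyMeasurable[ℱ (k + 1)] (D k) := by
      intro k
      refine StronglyMeasurable.indicator ?_ ((ℱ.mono (Nat.le_succ k)) _ (hGmeas k))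
      exact (hM.stronglyAdapted (k + 1)).sub ((hM.stronglyAdapted k).mono (ℱ.mono (Nat.le_succ k)))
    set N : ℕ → Ω → ℝ := fun n ω => M 0 ω + ∑ k ∈ Finset.range n, D k ω with hNdef
    have hNsucc : ∀ n ω, N (n + 1) ω = N n ω + D n ω := by
      intro n ω; simp [hNdef, Finset.sum_range_succ, add_assoc]
    have hN0 : N 0 = M 0 := by funext ω; simp [hNdef]
    have hN2 : ∀ n, MemLp (N n) 2 μ := by
      intro n
      induction n with
      | zero => rw [hN0]; exact hM2 0
      | succ n ih =>
        exact MemLp.ae_eq (Eventually.of_forall fun ω => (hNsucc n ω).symm) (ih.add (hD2 n))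
    have hNint : ∀ n, Integrable (N n) μ := fun n => (hN2 n).integrable one_le_two
    have hNm : ∀ n, StronglyMeasurable[ℱ n] (N n) := by
      intro n
      induction n with
      | zero => rw [hN0]; exact hM.stronglyAdapted 0
      | succ n ih =>
        have : N (n + 1) = fun ω => N n ω + D n ω := funext (hNsucc n)
        rw [this]
        exact (ih.mono (ℱ.mono (Nat.le_succ n))).add (hDm n)
    -- N is a martingale
    have hNmart : Martingale N ℱ μ := by
      refine martingale_nat (fun n => hNm n) hNint fun n => ?_
      have hre : N (n + 1) = fun ω => N n ω + D n ω := funext (hNsucc n)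
      have hadd : μ[N (n + 1)|ℱ n] =ᵐ[μ] μ[N n|ℱ n] + μ[D n|ℱ n] := by
        rw [hre]
        exact condExp_add (hNint n) ((hD2 n).integrable one_le_two) _
      have h1 : μ[N n|ℱ n] = N n :=
        condExp_of_stronglyMeasurable (ℱ.le n) (hNm n) (hNint n)
      have h2 : μ[D n|ℱ n] =ᵐ[μ] (G n).indicator (μ[(fun ω => M (n + 1) ω - M n ω)|ℱ n]) :=
        condExp_indicator (hΔint n) (hGmeas n)
      have h3 : μ[D n|ℱ n] =ᵐ[μ] 0 := by
        filter_upwards [h2, (hΔ0 n).mono fun ω hω => hω] with ω hω2 hω0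
        rw [hω2]
        by_cases h : ω ∈ G n
        · simp [Set.indicator_of_mem h, hω0]
        · simp [Set.indicator_of_notMem h]
      filter_upwards [hadd, h3] with ω hωa hω3
      simp [hωa, h1, hω3]
    -- integrability of products
    have hND_int : ∀ n, Integrable (fun ω => N n ω * D n ω) μ := by
      intro n
      have h : MemLp (N n • D n) 1 μ :=
        (hD2 n).smul (hN2 n) (r := 1)
      exact memLp_one_iff_integrable.mp h
    have hNΔ_int : ∀ n, Integrable (fun ω => N n ω * (M (n + 1) ω - M n ω)) μ := by
      intro n
      have h : MemLp (N n • fun ω => M (n + 1) ω - M n ω) 1 μ :=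
        (hΔ2 n).smul (hN2 n) (r := 1)
      exact memLp_one_iff_integrable.mp h
    -- cross terms vanish
    have hcross : ∀ n, ∫ ω, N n ω * D n ω ∂μ = 0 := by
      intro n
      have h1 : (fun ω => N n ω * D n ω)
          = (G n).indicator (fun ω => N n ω * (M (n + 1) ω - M n ω)) := by
        funext ω
        by_cases h : ω ∈ G n
        · simp [hDdef, Set.indicator_of_mem h]
        · simp [hDdef, Set.indicator_of_notMem h]
      rw [h1, integral_indicator ((ℱ.le n) _ (hGmeas n)),
        ← setIntegral_condExp (ℱ.le n) (hNΔ_int n) (hGmeas n)]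
      have h2 : μ[(fun ω => N n ω * (M (n + 1) ω - M n ω))|ℱ n] =ᵐ[μ] 0 := by
        have hpull := condExp_mul_of_stronglyMeasurable_left (hNm n) (hNΔ_int n) (hΔint n)
        refine hpull.trans ?_
        filter_upwards [hΔ0 n] with ω hω
        simp [Pi.mul_apply, hω]
      calc ∫ ω in G n, (μ[(fun ω => N n ω * (M (n + 1) ω - M n ω))|ℱ n]) ω ∂μ
          = ∫ ω in G n, (0 : Ω → ℝ) ω ∂μ :=
            integral_congr_ae (ae_restrict_of_ae h2)
        _ = 0 := by simp
    -- square of increments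
    have hDsq : ∀ n, ∫ ω, (D n ω) ^ 2 ∂μ = ∫ ω in G n, e n ω ∂μ := by
      intro n
      have h1 : (fun ω => (D n ω) ^ 2)
          = (G n).indicator (fun ω => (M (n + 1) ω - M n ω) ^ 2) := by
        funext ω
        by_cases h : ω ∈ G n
        · simp [hDdef, Set.indicator_of_mem h]
        · simp [hDdef, Set.indicator_of_notMem h]
      rw [h1, integral_indicator ((ℱ.le n) _ (hGmeas n)),
        ← setIntegral_condExp (ℱ.le n) (hΔsq_int n) (hGmeas n)]
    -- second moment formula
    have hsum : ∀ n, ∫ ω, (N n ω) ^ 2 ∂μ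
        = (∫ ω, (M 0 ω) ^ 2 ∂μ) + ∑ k ∈ Finset.range n, ∫ ω in G k, e k ω ∂μ := by
      intro n
      induction n with
      | zero => simp [hN0]
      | succ n ih =>
        have hexp : (fun ω => (N (n + 1) ω) ^ 2)
            = fun ω => (N n ω) ^ 2 + (2 * (N n ω * D n ω) + (D n ω) ^ 2) := by
          funext ω; rw [hNsucc n ω]; ring
        have hi1 : Integrable (fun ω => 2 * (N n ω * D n ω)) μ := (hND_int n).const_mul 2
        have hi2 : Integrable (fun ω => (D n ω) ^ 2) μ := (hD2 n).integrable_sq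
        have hi3 : Integrable (fun ω => 2 * (N n ω * D n ω) + (D n ω) ^ 2) μ := hi1.add hi2
        rw [hexp, integral_add ((hN2 n).integrable_sq) hi3, integral_add hi1 hi2,
          integral_const_mul, hcross n, hDsq n, ih, Finset.sum_range_succ]
        ring
    -- bound on the sums of set integrals
    have hbound : ∀ n, ∑ k ∈ Finset.range n, ∫ ω in G k, e k ω ∂μ ≤ (K : ℝ) := by
      intro n
      have h1 : ∀ k, ∫ ω in G k, e k ω ∂μ = ∫ ω, (G k).indicator (e k) ω ∂μ :=
        fun k => (integral_indicator ((ℱ.le k) _ (hGmeas k))).symm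
      rw [Finset.sum_congr rfl fun k _ => h1 k,
        ← integral_finset_sum _ fun k _ => (he_int k).indicator ((ℱ.le k) _ (hGmeas k))]
      have hae : (fun ω => ∑ k ∈ Finset.range n, (G k).indicator (e k) ω)
          ≤ᵐ[μ] fun _ => (K : ℝ) := by
        filter_upwards [he_nonneg] with ω hω
        induction n with
        | zero => simp
        | succ n ih =>
          by_cases hmem : ω ∈ G n
          · have heq : ∀ k ∈ Finset.range (n + 1), (G k).indicator (e k) ω = e k ω :=
              fun k hk => Set.indicator_of_mem
                (hGanti (Nat.lt_succ_iff.mp (Finset.mem_range.mp hk)) hmem) _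
            rw [Finset.sum_congr rfl heq]
            exact hmem n le_rfl
          · rw [Finset.sum_range_succ, Set.indicator_of_notMem hmem, add_zero]
            exact ih
      calc ∫ ω, ∑ k ∈ Finset.range n, (G k).indicator (e k) ω ∂μ
          ≤ ∫ _, (K : ℝ) ∂μ := integral_mono_ae
            (integrable_finset_sum _ fun k _ => (he_int k).indicator ((ℱ.le k) _ (hGmeas k)))
            (integrable_const _) hae
        _ = (K : ℝ) := by simp
    set B : ℝ := (∫ ω, (M 0 ω) ^ 2 ∂μ) + K with hBdef
    have hL2 : ∀ n, ∫ ω, (N n ω) ^ 2 ∂μ ≤ B := by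
      intro n; rw [hsum n]; exact add_le_add_right (hbound n) _
    -- L¹ bound
    have hL1 : ∀ n, eLpNorm (N n) 1 μ ≤ ENNReal.ofReal (Real.sqrt B) := by
      intro n
      refine le_trans (eLpNorm_le_eLpNorm_of_exponent_le one_le_two
        (hN2 n).aestronglyMeasurable) ?_
      rw [(hN2 n).eLpNorm_eq_integral_rpow_norm two_ne_zero ENNReal.ofNat_ne_top]
      apply ENNReal.ofReal_le_ofReal
      have hnorm : ∫ ω, ‖N n ω‖ ^ (2 : ENNReal).toReal ∂μ = ∫ ω, (N n ω) ^ 2 ∂μ := by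
        refine integral_congr_ae (Eventually.of_forall fun ω => ?_)
        simp only [ENNReal.toReal_ofNat, Real.rpow_two, Real.norm_eq_abs, sq_abs]
      rw [hnorm, Real.sqrt_eq_rpow, ENNReal.toReal_ofNat]
      rw [show ((2 : ℝ))⁻¹ = 1 / 2 by norm_num]
      exact Real.rpow_le_rpow (integral_nonneg fun ω => sq_nonneg _) (hL2 n) (by norm_num)
    -- convergence of N
    have hconvN : ∀ᵐ ω ∂μ, ∃ c, Tendsto (fun n => N n ω) atTop (nhds c) := by
      refine hNmart.submartingale.exists_ae_tendsto_of_bdd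
        (R := (Real.sqrt B).toNNReal) fun n => ?_
      exact (hL1 n).trans_eq rfl
    filter_upwards [hconvN] with ω hconv hAbdd
    obtain ⟨c, hc⟩ := hconv
    refine ⟨c, ?_⟩
    have hmem : ∀ k, ω ∈ G k := fun k j _ => hAbdd j
    have heqM : ∀ n, N n ω = M n ω := by
      intro n
      have hDval : ∀ k ∈ Finset.range n, D k ω = M (k + 1) ω - M k ω :=
        fun k _ => Set.indicator_of_mem (hmem k) _
      rw [hNdef]
      simp only []
      rw [Finset.sum_congr rfl hDval, Finset.sum_range_sub (fun m => M m ω)]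
      ring
    exact hc.congr heqM
  -- assemble over all K
  filter_upwards [ae_all_iff.2 key] with ω hω hbdd
  obtain ⟨b, hb⟩ := hbdd
  exact hω ⌈b⌉₊ fun n => le_trans (hb (Set.mem_range_self n)) (Nat.le_ceil b)
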